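/- For 0 ≤ p < ∞, α ∈ (0,1), and a traded asset S = (S_0, S_T) with S_T ∈ L^p_+ nonzero, the Value-at-Risk based risk measure ρ_{A_α,S}(X) = inf{m : P(X + (m/S_0) S_T < 0) ≤ α} is finitely valued on L^p if and only if P(S_T = 0) < min{α, 1 − α}; moreover ρ_{A_α,S} is never continuous on all of L^p. -/

import Mathlib

open MeasureTheory Filter Topology ENNReal

variable {Ω : Type*} [MeasureSpace Ω] [IsProbabilityMeasure (volume : Measure Ω)]

/-- The Value-at-Risk acceptance set at level α in Lᵖ. -/
def varAcc (p : ℝ≥0∞) (α : ℝ) : Set (Lp ℝ p (volume : Measure Ω)) :=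
  {f | volume {ω | f ω < 0} ≤ ENNReal.ofReal α}

/-- The risk measure ρ_{A,S} with eligible asset S = (S₀, S_T). -/
noncomputable def rho (p : ℝ≥0∞) [Fact (1 ≤ p)] (A : Set (Lp ℝ p (volume : Measure Ω)))
    (S0 : ℝ) (ST : Lp ℝ p (volume : Measure Ω)) (x : Lp ℝ p (volume : Measure Ω)) : EReal :=
  sInf ((fun r : ℝ => (r : EReal)) '' {r : ℝ | x + (r / S0) • ST ∈ A})

lemma rv_half (hna : ∀ s : Set Ω, MeasurableSet s → 0 < volume s →
      ∃ t ⊆ s, MeasurableSet t ∧ 0 < volume t ∧ volume t < volume s)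
    (ν : Measure Ω) (B : Set Ω) (hB : MeasurableSet B) (hμB : 0 < volume B) :
    ∃ C ⊆ B, MeasurableSet C ∧ 0 < volume C ∧ volume C < volume B ∧ ν C ≤ ν B / 2 := by
  obtain ⟨t, htB, htm, ht0, htlt⟩ := hna B hB hμB
  have hBt_m : MeasurableSet (B \ t) := hB.diff htm
  have hfin : volume t ≠ ⊤ := (measure_lt_top _ _).ne
  have hBt : volume (B \ t) = volume B - volume t := measure_diff htB htm.nullMeasurableSet hfin
  have hBt0 : 0 < volume (B \ t) := by
    rw [hBt]; exact tsub_pos_of_lt htlt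
  have hBtlt : volume (B \ t) < volume B := by
    refine (measure_diff_lt_of_lt_add htm.nullMeasurableSet htB hfin ?_)
    nth_rewrite 1 [← zero_add (volume B)]
    exact ENNReal.add_lt_add_right (measure_lt_top _ _).ne ht0
  have hsum : ν t + ν (B \ t) = ν B := by
    rw [← measure_union (Set.disjoint_sdiff_right) hBt_m, Set.union_diff_cancel htB]
  have : ν t ≤ ν B / 2 ∨ ν (B \ t) ≤ ν B / 2 := by
    by_contra h
    push_neg at h
    obtain ⟨h1, h2⟩ := h
    have hνB : ν B ≠ ⊤ := by
      intro htop
      rw [htop] at h1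
      simp [ENNReal.top_div] at h1
    have := ENNReal.add_halves (ν B)
    have hlt : ν B / 2 + ν B / 2 < ν t + ν (B \ t) := ENNReal.add_lt_add h1 h2
    rw [this, hsum] at hlt
    exact lt_irrefl _ hlt
  rcases this with h | h
  · exact ⟨t, htB, htm, ht0, htlt, h⟩
  · exact ⟨B \ t, Set.diff_subset, hBt_m, hBt0, hBtlt, h⟩

lemma rv_small (hna : ∀ s : Set Ω, MeasurableSet s → 0 < volume s →
      ∃ t ⊆ s, MeasurableSet t ∧ 0 < volume t ∧ volume t < volume s)
    (ν : Measure Ω) (B : Set Ω) (hB : MeasurableSet B) (hμB : 0 < volume B)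
    (hνB : ν B ≠ ⊤) {ε : ℝ≥0∞} (hε : ε ≠ 0) :
    ∃ C ⊆ B, MeasurableSet C ∧ 0 < volume C ∧ volume C < volume B ∧ ν C ≤ ε := by
  have key : ∀ k : ℕ, ∃ C ⊆ B, MeasurableSet C ∧ 0 < volume C ∧ volume C < volume B ∧
      ν C ≤ ν B * 2⁻¹ ^ k := by
    intro k
    induction k with
    | zero =>
      obtain ⟨C, hCB, h1, h2, h3, h4⟩ := rv_half hna ν B hB hμB
      exact ⟨C, hCB, h1, h2, h3, h4.trans (by
        simpa using ENNReal.half_le_self (a := ν B))⟩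
    | succ k ih =>
      obtain ⟨C, hCB, h1, h2, h3, h4⟩ := ih
      obtain ⟨C', hC'C, g1, g2, g3, g4⟩ := rv_half hna ν C h1 h2
      refine ⟨C', hC'C.trans hCB, g1, g2, g3.trans h3, ?_⟩
      calc ν C' ≤ ν C / 2 := g4
      _ ≤ ν B * 2⁻¹ ^ k / 2 := by exact ENNReal.div_le_div_right h4 2
      _ = ν B * 2⁻¹ ^ (k + 1) := by
          rw [pow_succ, div_eq_mul_inv, mul_assoc]
  obtain ⟨k, hk⟩ : ∃ k : ℕ, ν B * 2⁻¹ ^ k ≤ ε := by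
    rcases eq_or_ne (ν B) 0 with h0 | h0
    · exact ⟨0, by simp [h0]⟩
    · have hd : ε / ν B ≠ 0 := by
        simp [ENNReal.div_eq_zero_iff, hε, hνB]
      obtain ⟨k, hk⟩ := ENNReal.exists_inv_two_pow_lt hd
      refine ⟨k, ?_⟩
      calc ν B * 2⁻¹ ^ k ≤ ν B * (ε / ν B) := by
            exact mul_le_mul_right hk.le _
      _ ≤ ε := ENNReal.mul_div_le
  obtain ⟨C, hCB, h1, h2, h3, h4⟩ := key k
  exact ⟨C, hCB, h1, h2, h3, h4.trans hk⟩

lemma rv_exact (hna : ∀ s : Set Ω, MeasurableSet s → 0 < volume s →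
      ∃ t ⊆ s, MeasurableSet t ∧ 0 < volume t ∧ volume t < volume s)
    {S : Set Ω} (hS : MeasurableSet S) {c : ℝ≥0∞} (hc : c ≤ volume S) :
    ∃ A ⊆ S, MeasurableSet A ∧ volume A = c := by
  have hc_top : c ≠ ⊤ := (hc.trans_lt (measure_lt_top _ _)).ne
  let σ : Set Ω → ℝ≥0∞ := fun t => sSup {m | ∃ u, MeasurableSet u ∧ u ⊆ S \ t ∧
    volume u ≤ c - volume t ∧ volume u = m}
  have hstep : ∀ t : {t : Set Ω // MeasurableSet t ∧ t ⊆ S ∧ volume t ≤ c},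
      ∃ u, MeasurableSet u ∧ u ⊆ S \ t.1 ∧ volume u ≤ c - volume t.1 ∧
        σ t.1 / 2 ≤ volume u := by
    intro t
    rcases eq_or_ne (σ t.1) 0 with h0 | h0
    · exact ⟨∅, MeasurableSet.empty, Set.empty_subset _, by simp, by simp [h0]⟩
    · have hσt : σ t.1 ≠ ⊤ := by
        refine ne_of_lt (lt_of_le_of_lt (sSup_le ?_) hc_top.lt_top)
        rintro m ⟨u, _, _, hle, rfl⟩
        exact hle.trans tsub_le_self
      have hhalf : σ t.1 / 2 < σ t.1 := ENNReal.half_lt_self h0 hσt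
      obtain ⟨m, hm, hlt⟩ := lt_sSup_iff.mp hhalf
      obtain ⟨u, hu1, hu2, hu3, rfl⟩ := hm
      exact ⟨u, hu1, hu2, hu3, hlt.le⟩
  let step : {t : Set Ω // MeasurableSet t ∧ t ⊆ S ∧ volume t ≤ c} →
      {t : Set Ω // MeasurableSet t ∧ t ⊆ S ∧ volume t ≤ c} := fun t =>
    ⟨t.1 ∪ (hstep t).choose, by
      obtain ⟨hu1, hu2, hu3, hu4⟩ := (hstep t).choose_spec
      have hdisj : Disjoint t.1 (hstep t).choose := ((Set.subset_diff.mp hu2).2).symm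
      refine ⟨t.2.1.union hu1, Set.union_subset t.2.2.1 (hu2.trans Set.diff_subset), ?_⟩
      rw [measure_union hdisj hu1]
      calc volume t.1 + volume (hstep t).choose ≤ volume t.1 + (c - volume t.1) :=
            add_le_add_right hu3 _
      _ = c := add_tsub_cancel_of_le t.2.2.2⟩
  have step_ge : ∀ t, volume t.1 + σ t.1 / 2 ≤ volume (step t).1 := by
    intro t
    obtain ⟨hu1, hu2, hu3, hu4⟩ := (hstep t).choose_spec
    have hdisj : Disjoint t.1 (hstep t).choose := ((Set.subset_diff.mp hu2).2).symm
    show volume t.1 + σ t.1 / 2 ≤ volume (t.1 ∪ (hstep t).choose)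
    rw [measure_union hdisj hu1]
    exact add_le_add_right hu4 _
  have step_mono : ∀ t, t.1 ⊆ (step t).1 := fun t => Set.subset_union_left
  let seq : ℕ → {t : Set Ω // MeasurableSet t ∧ t ⊆ S ∧ volume t ≤ c} := fun n =>
    step^[n] ⟨∅, MeasurableSet.empty, Set.empty_subset _, by simp⟩
  have hseq_succ : ∀ n, seq (n + 1) = step (seq n) := fun n =>
    Function.iterate_succ_apply' step n _
  have hmono : Monotone fun n => (seq n).1 := by
    apply monotone_nat_of_le_succ
    intro n
    rw [hseq_succ n]
    exact step_mono _
  set A := ⋃ n, (seq n).1 with hA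
  have hAm : MeasurableSet A := MeasurableSet.iUnion fun n => (seq n).2.1
  have hAS : A ⊆ S := Set.iUnion_subset fun n => (seq n).2.2.1
  have hsub : ∀ n, (seq n).1 ⊆ A := fun n => Set.subset_iUnion (fun n => (seq n).1) n
  have hμA_le : volume A ≤ c := by
    rw [hA, hmono.measure_iUnion]
    exact iSup_le fun n => (seq n).2.2.2
  refine ⟨A, hAS, hAm, ?_⟩
  by_contra hne
  have hlt : volume A < c := lt_of_le_of_ne hμA_le hne
  have hgap : (0 : ℝ≥0∞) < c - volume A := tsub_pos_of_lt hlt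
  have hSA : 0 < volume (S \ A) := by
    have : volume (S \ A) = volume S - volume A :=
      measure_diff hAS hAm.nullMeasurableSet (measure_lt_top _ _).ne
    rw [this]
    exact hgap.trans_le (tsub_le_tsub_right hc _)
  obtain ⟨u0, hu0S, hu0m, hu0pos, _, hu0le⟩ :=
    rv_small hna volume (S \ A) (hS.diff hAm) hSA (measure_lt_top _ _).ne hgap.ne'
  set ε := volume u0 / 2 with hε
  have hε0 : ε ≠ 0 := (ENNReal.half_pos hu0pos.ne').ne'
  have hεtop : ε ≠ ⊤ := (ENNReal.half_le_self.trans_lt (measure_lt_top _ _)).ne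
  have key2 : ∀ n, volume (seq n).1 + ε ≤ volume (seq (n + 1)).1 := by
    intro n
    have hq : volume u0 ≤ σ (seq n).1 := by
      apply le_sSup
      refine ⟨u0, hu0m, hu0S.trans (Set.diff_subset_diff_right (hsub n)), ?_, rfl⟩
      exact hu0le.trans (tsub_le_tsub_left (measure_mono (hsub n)) c)
    have : ε ≤ σ (seq n).1 / 2 := ENNReal.div_le_div_right hq 2
    calc volume (seq n).1 + ε ≤ volume (seq n).1 + σ (seq n).1 / 2 := add_le_add_right this _
    _ ≤ volume (step (seq n)).1 := step_ge _
    _ = volume (seq (n + 1)).1 := by rw [hseq_succ n]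
  have hn_bound : ∀ n : ℕ, (n : ℝ≥0∞) * ε ≤ volume (seq n).1 := by
    intro n
    induction n with
    | zero => simp
    | succ n ih =>
      push_cast
      calc ((n : ℝ≥0∞) + 1) * ε = (n : ℝ≥0∞) * ε + ε := by ring
      _ ≤ volume (seq n).1 + ε := add_le_add_left ih _
      _ ≤ volume (seq (n + 1)).1 := key2 n
  obtain ⟨n, hn⟩ := ENNReal.exists_nat_gt (ENNReal.div_lt_top hc_top hε0).ne
  have : c < (n : ℝ≥0∞) * ε := by
    have h1 : c / ε * ε = c := ENNReal.div_mul_cancel hε0 hεtop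
    calc c = c / ε * ε := h1.symm
    _ < (n : ℝ≥0∞) * ε := by
        exact ENNReal.mul_lt_mul_left hε0 hεtop hn
  exact absurd ((hn_bound n).trans (seq n).2.2.2) (by exact not_le.mpr this)

lemma rv_unbounded {p : ℝ≥0∞} [Fact (1 ≤ p)] (hp : p ≠ ∞)
    (hna : ∀ s : Set Ω, MeasurableSet s → 0 < volume s →
      ∃ t ⊆ s, MeasurableSet t ∧ 0 < volume t ∧ volume t < volume s)
    (ST : Lp ℝ p (volume : Measure Ω))
    (hPos : 0 < volume {ω | 0 < ST ω}) :
    ∃ x : Lp ℝ p (volume : Measure Ω), ∀ r : ℝ,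
      volume {ω | ST ω = 0} < volume {ω | x ω + r * ST ω < 0} := by
  have hp1 : 1 ≤ p := Fact.out
  have hp0 : p ≠ 0 := (lt_of_lt_of_le zero_lt_one hp1).ne'
  set s : Ω → ℝ := ⇑ST with hs
  have hsm : Measurable s := (Lp.stronglyMeasurable ST).measurable
  set E := {ω : Ω | s ω = 0} with hE
  set Pos := {ω : Ω | 0 < s ω} with hPos'
  have hEm : MeasurableSet E := hsm (measurableSet_singleton 0)
  have hPosm : MeasurableSet Pos := measurableSet_lt measurable_const hsm
  have hdisjEP : Disjoint E Pos := by
    rw [Set.disjoint_left]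
    intro ω h1 h2
    rw [hE, Set.mem_setOf_eq] at h1
    rw [hPos', Set.mem_setOf_eq] at h2
    linarith
  set q := p.toReal with hq
  have hq1 : 1 ≤ q := by
    rw [hq, ← ENNReal.toReal_one]
    exact ENNReal.toReal_mono hp hp1
  have hq0 : (0:ℝ) < q := lt_of_lt_of_le one_pos hq1
  set ν := (volume : Measure Ω).withDensity (fun ω => (‖s ω‖₊ : ℝ≥0∞) ^ q) with hν
  have hνfin : ν Set.univ < ⊤ := by
    rw [hν, withDensity_apply _ MeasurableSet.univ, Measure.restrict_univ]
    exact lintegral_rpow_enorm_lt_top_of_eLpNorm_lt_top hp0 hp (Lp.eLpNorm_lt_top ST)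
  have hνne : ∀ B : Set Ω, ν B ≠ ⊤ := fun B =>
    ((measure_mono (Set.subset_univ B)).trans_lt hνfin).ne
  set εseq : ℕ → ℝ≥0∞ := fun n => 2⁻¹ ^ n * ((n : ℝ≥0∞) ^ q)⁻¹ with hεseq
  have hεseq0 : ∀ n, εseq n ≠ 0 := by
    intro n
    apply mul_ne_zero
    · exact pow_ne_zero _ (ENNReal.inv_ne_zero.mpr (by norm_num))
    · exact ENNReal.inv_ne_zero.mpr (ENNReal.rpow_ne_top_of_nonneg hq0.le (ENNReal.natCast_ne_top n))
  -- recursive chain of sets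
  have hstep : ∀ (n : ℕ) (B : {B : Set Ω // MeasurableSet B ∧ B ⊆ Pos ∧ 0 < volume B}),
      ∃ C : Set Ω, (C ⊆ B.1 ∧ MeasurableSet C ∧ 0 < volume C) ∧
        (volume C < volume B.1 ∧ ν C ≤ εseq n) := by
    intro n B
    obtain ⟨C, h1, h2, h3, h4, h5⟩ := rv_small hna ν B.1 B.2.1 B.2.2.2 (hνne _) (hεseq0 n)
    exact ⟨C, ⟨h1, h2, h3⟩, h4, h5⟩
  set F : ℕ → {B : Set Ω // MeasurableSet B ∧ B ⊆ Pos ∧ 0 < volume B} →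
      {B : Set Ω // MeasurableSet B ∧ B ⊆ Pos ∧ 0 < volume B} := fun n B =>
    ⟨(hstep n B).choose, (hstep n B).choose_spec.1.2.1,
      ((hstep n B).choose_spec.1.1).trans B.2.2.1, (hstep n B).choose_spec.1.2.2⟩ with hF
  set C : ℕ → {B : Set Ω // MeasurableSet B ∧ B ⊆ Pos ∧ 0 < volume B} := fun n =>
    Nat.rec ⟨Pos, hPosm, subset_rfl, hPos⟩ (fun n ih => F (n+1) ih) n with hC
  have hC_succ : ∀ n, C (n+1) = F (n+1) (C n) := fun n => rfl
  have hC_sub : ∀ n, (C (n+1)).1 ⊆ (C n).1 := fun n => (hstep (n+1) (C n)).choose_spec.1.1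
  have hC_lt : ∀ n, volume (C (n+1)).1 < volume (C n).1 := fun n =>
    (hstep (n+1) (C n)).choose_spec.2.1
  have hC_ν : ∀ n, ν (C (n+1)).1 ≤ εseq (n+1) := fun n =>
    (hstep (n+1) (C n)).choose_spec.2.2
  have hC_anti : Antitone fun n => (C n).1 := antitone_nat_of_succ_le hC_sub
  set D : ℕ → Set Ω := fun n => (C n).1 \ (C (n+1)).1 with hD
  have hD_meas : ∀ n, MeasurableSet (D n) := fun n => (C n).2.1.diff (C (n+1)).2.1
  have hD_sub : ∀ n, D n ⊆ Pos := fun n => Set.diff_subset.trans (C n).2.2.1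
  have hD_pos : ∀ n, 0 < volume (D n) := by
    intro n
    rw [hD]
    rw [measure_diff (hC_sub n) (C (n+1)).2.1.nullMeasurableSet (measure_lt_top _ _).ne]
    exact tsub_pos_of_lt (hC_lt n)
  have hD_ν : ∀ n, ν (D n) ≤ ν (C n).1 := fun n => measure_mono Set.diff_subset
  have hD_disj : ∀ m n, m ≠ n → Disjoint (D m) (D n) := by
    have key : ∀ m n, m < n → Disjoint (D m) (D n) := by
      intro m n hmn
      have h1 : D n ⊆ (C (m+1)).1 := Set.diff_subset.trans (hC_anti hmn)
      exact (Set.disjoint_sdiff_left (s := (C (m+1)).1) (t := (C m).1)).mono_right h1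
    intro m n hmn
    rcases lt_or_gt_of_ne hmn with h | h
    · exact key m n h
    · exact (key n m h).symm
  have hD_notmem : ∀ {ω : Ω} {n m : ℕ}, ω ∈ D n → m ≠ n → ω ∉ D m := by
    intro ω n m hωn hmn hωm
    exact Set.disjoint_left.mp (hD_disj m n hmn) hωm hωn
  -- the function
  set F0 : Ω → ℝ≥0∞ := fun ω => ∑' n, (D n).indicator (fun _ => (n : ℝ≥0∞)) ω with hF0
  have hF0m : Measurable F0 := Measurable.ennreal_tsum fun n =>
    measurable_const.indicator (hD_meas n)
  have hF0_on : ∀ {n : ℕ} {ω : Ω}, ω ∈ D n → F0 ω = n := by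
    intro n ω hω
    rw [hF0]
    simp only
    rw [tsum_eq_single n]
    · rw [Set.indicator_of_mem hω]
    · intro m hmn
      rw [Set.indicator_of_notMem (hD_notmem hω hmn)]
  have hF0_off : ∀ {ω : Ω}, (∀ n, ω ∉ D n) → F0 ω = 0 := by
    intro ω hω
    rw [hF0]
    simp only
    rw [ENNReal.tsum_eq_zero]
    intro m
    rw [Set.indicator_of_notMem (hω m)]
  set x0 : Ω → ℝ := fun ω => -(E.indicator (fun _ => (1:ℝ)) ω) - (F0 ω).toReal * s ω with hx0
  have hx0m : Measurable x0 :=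
    ((measurable_const.indicator hEm).neg).sub (hF0m.ennreal_toReal.mul hsm)
  have hx0_E : ∀ {ω}, ω ∈ E → x0 ω = -1 := by
    intro ω hω
    have hs0 : s ω = 0 := hω
    have : ∀ n, ω ∉ D n := by
      intro n hn
      have := hD_sub n hn
      rw [hPos', Set.mem_setOf_eq] at this
      linarith
    rw [hx0]
    simp only
    rw [Set.indicator_of_mem hω, hF0_off this]
    simp
  have hx0_D : ∀ {n : ℕ} {ω}, ω ∈ D n → x0 ω = -((n:ℝ) * s ω) := by
    intro n ω hω
    have hωP : ω ∈ Pos := hD_sub n hω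
    have hωE : ω ∉ E := Set.disjoint_right.mp hdisjEP hωP
    rw [hx0]
    simp only
    rw [Set.indicator_of_notMem hωE, hF0_on hω]
    simp
  have hx0_other : ∀ {ω}, ω ∉ E → (∀ n, ω ∉ D n) → x0 ω = 0 := by
    intro ω h1 h2
    rw [hx0]
    simp only
    rw [Set.indicator_of_notMem h1, hF0_off h2]
    simp
  have hsq_m : Measurable fun ω => (‖s ω‖₊ : ℝ≥0∞) ^ q :=
    hsm.nnnorm.coe_nnreal_ennreal.pow_const q
  have hWeq : ∀ ω, ((‖x0 ω‖₊ : ℝ≥0∞)) ^ q =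
      E.indicator (fun _ => (1:ℝ≥0∞)) ω +
      ∑' n, (D n).indicator (fun ω' => ((n:ℝ≥0∞)) ^ q * (‖s ω'‖₊ : ℝ≥0∞) ^ q) ω := by
    intro ω
    by_cases hωE : ω ∈ E
    · have h2 : ∀ n, ω ∉ D n := fun n hn => Set.disjoint_left.mp hdisjEP hωE (hD_sub n hn)
      have h3 : ∑' n, (D n).indicator (fun ω' => ((n:ℝ≥0∞)) ^ q * (‖s ω'‖₊ : ℝ≥0∞) ^ q) ω = 0 := by
        rw [ENNReal.tsum_eq_zero]
        intro n
        rw [Set.indicator_of_notMem (h2 n)]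
      rw [h3, hx0_E hωE, Set.indicator_of_mem hωE]
      simp [ENNReal.one_rpow]
    · by_cases hωD : ∃ n, ω ∈ D n
      · obtain ⟨n, hn⟩ := hωD
        have h3 : ∑' m, (D m).indicator (fun ω' => ((m:ℝ≥0∞)) ^ q * (‖s ω'‖₊ : ℝ≥0∞) ^ q) ω
            = ((n:ℝ≥0∞)) ^ q * (‖s ω‖₊ : ℝ≥0∞) ^ q := by
          rw [tsum_eq_single n]
          · rw [Set.indicator_of_mem hn]
          · intro m hmn
            rw [Set.indicator_of_notMem (hD_notmem hn hmn)]
        rw [h3, hx0_D hn, Set.indicator_of_notMem hωE]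
        rw [nnnorm_neg, nnnorm_mul, Real.nnnorm_natCast]
        rw [ENNReal.coe_mul, ENNReal.mul_rpow_of_nonneg _ _ hq0.le, ENNReal.coe_natCast]
        rw [zero_add]
      · push_neg at hωD
        have h3 : ∑' m, (D m).indicator (fun ω' => ((m:ℝ≥0∞)) ^ q * (‖s ω'‖₊ : ℝ≥0∞) ^ q) ω = 0 := by
          rw [ENNReal.tsum_eq_zero]
          intro m
          rw [Set.indicator_of_notMem (hωD m)]
        rw [h3, hx0_other hωE hωD, Set.indicator_of_notMem hωE]
        simp [ENNReal.zero_rpow_of_pos hq0]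
  have hmemx0 : MemLp x0 p (volume : Measure Ω) := by
    constructor
    · exact hx0m.aestronglyMeasurable
    · rw [eLpNorm_eq_lintegral_rpow_enorm hp0 hp]; simp only [enorm_eq_nnnorm]
      refine ENNReal.rpow_lt_top_of_nonneg (by positivity) ?_
      have hkey : (∫⁻ ω, (‖x0 ω‖₊ : ℝ≥0∞) ^ p.toReal ∂(volume : Measure Ω))
          = volume E + ∑' n : ℕ, ((n:ℝ≥0∞))^q * ν (D n) := by
        rw [← hq, lintegral_congr hWeq,
          lintegral_add_left (measurable_const.indicator hEm)]
        congr 1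
        · rw [lintegral_indicator hEm, setLIntegral_one]
        · rw [lintegral_tsum (fun n =>
            ((hsq_m.const_mul _).indicator (hD_meas n)).aemeasurable)]
          congr 1
          funext n
          rw [lintegral_indicator (hD_meas n), lintegral_const_mul _ hsq_m, hν,
            withDensity_apply _ (hD_meas n)]
      rw [hkey]
      refine (ENNReal.add_lt_top.mpr ⟨measure_lt_top (volume : Measure Ω) E, ?_⟩).ne
      have hterm : ∀ n : ℕ, ((n:ℝ≥0∞))^q * ν (D n) ≤ 2⁻¹ ^ n := by
        intro n
        cases n with
        | zero => simp [ENNReal.zero_rpow_of_pos hq0]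
        | succ m =>
          have h1 : ν (D (m+1)) ≤ εseq (m+1) := (hD_ν (m+1)).trans (hC_ν m)
          have hne : (((m+1:ℕ)):ℝ≥0∞)^q ≠ 0 := by
            refine (ENNReal.rpow_pos ?_ (ENNReal.natCast_ne_top _)).ne'
            exact_mod_cast Nat.succ_pos m
          have hnetop : (((m+1:ℕ)):ℝ≥0∞)^q ≠ ⊤ :=
            ENNReal.rpow_ne_top_of_nonneg hq0.le (ENNReal.natCast_ne_top _)
          calc (((m+1:ℕ)):ℝ≥0∞)^q * ν (D (m+1))
              ≤ (((m+1:ℕ)):ℝ≥0∞)^q * (2⁻¹ ^ (m+1) * ((((m+1:ℕ)):ℝ≥0∞) ^ q)⁻¹) :=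
                mul_le_mul_right h1 _
          _ = 2⁻¹ ^ (m+1) * ((((m+1:ℕ)):ℝ≥0∞)^q * ((((m+1:ℕ)):ℝ≥0∞) ^ q)⁻¹) := by ring
          _ = 2⁻¹ ^ (m+1) := by rw [ENNReal.mul_inv_cancel hne hnetop, mul_one]
      calc ∑' n : ℕ, ((n:ℝ≥0∞))^q * ν (D n) ≤ ∑' n : ℕ, (2⁻¹:ℝ≥0∞) ^ n :=
            ENNReal.tsum_le_tsum hterm
      _ = (1 - 2⁻¹)⁻¹ := ENNReal.tsum_geometric _
      _ < ⊤ := by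
          rw [ENNReal.one_sub_inv_two]
          simp
  refine ⟨hmemx0.toLp x0, ?_⟩
  intro r
  have hcoe : ⇑(hmemx0.toLp x0) =ᵐ[(volume : Measure Ω)] x0 := hmemx0.coeFn_toLp
  have hset : {ω | (hmemx0.toLp x0) ω + r * s ω < 0}
      =ᵐ[(volume : Measure Ω)] {ω | x0 ω + r * s ω < 0} := by
    filter_upwards [hcoe] with ω hω
    exact congrArg (fun z : ℝ => (z + r * s ω < 0 : Prop)) hω
  rw [measure_congr hset]
  obtain ⟨n0, hn0⟩ := exists_nat_gt (max r 0)
  have hrn : r < n0 := lt_of_le_of_lt (le_max_left _ _) hn0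
  have hincl : E ∪ D n0 ⊆ {ω | x0 ω + r * s ω < 0} := by
    rintro ω (hω | hω)
    · have h1 : x0 ω = -1 := hx0_E hω
      have h2 : s ω = 0 := hω
      simp [Set.mem_setOf_eq, h1, h2]
    · have h1 : x0 ω = -((n0:ℝ) * s ω) := hx0_D hω
      have h2 : 0 < s ω := hD_sub n0 hω
      rw [Set.mem_setOf_eq, h1]
      nlinarith
  calc volume E < volume E + volume (D n0) :=
        ENNReal.lt_add_right (measure_ne_top _ _) (hD_pos n0).ne'
  _ = volume (E ∪ D n0) :=
        (measure_union (hdisjEP.mono_right (hD_sub n0)) (hD_meas n0)).symm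
  _ ≤ _ := measure_mono hincl

set_option maxHeartbeats 2000000 in
/-- on a nonatomic probability space, the VaR-based risk measure is
finitely valued on Lᵖ iff P(S_T = 0) < min{α, 1-α}, and it is never globally
continuous. -/
theorem rho_varAcc_finite_iff_and_not_continuous (p : ℝ≥0∞) [Fact (1 ≤ p)] (hp : p ≠ ∞)
    (hna : ∀ s : Set Ω, MeasurableSet s → 0 < volume s →
      ∃ t ⊆ s, MeasurableSet t ∧ 0 < volume t ∧ volume t < volume s)
    (α : ℝ) (hα : α ∈ Set.Ioo (0 : ℝ) 1)
    (S0 : ℝ) (hS0 : 0 < S0)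
    (ST : Lp ℝ p (volume : Measure Ω)) (hST : 0 ≤ ST) (hSTne : ST ≠ 0) :
    ((∀ x, rho p (varAcc (Ω := Ω) p α) S0 ST x ≠ ⊤ ∧
        rho p (varAcc (Ω := Ω) p α) S0 ST x ≠ ⊥) ↔
      volume {ω | ST ω = 0} < ENNReal.ofReal (min α (1 - α))) ∧
    ¬ Continuous (rho p (varAcc (Ω := Ω) p α) S0 ST) := by
  obtain ⟨hα0, hα1⟩ := hα
  set a := ENNReal.ofReal α with ha
  have ha0 : a ≠ 0 := (ENNReal.ofReal_pos.mpr hα0).ne'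
  have ha_top : a ≠ ⊤ := ENNReal.ofReal_ne_top
  have ha_lt1 : a < 1 := by
    rw [ha, ← ENNReal.ofReal_one]
    exact (ENNReal.ofReal_lt_ofReal_iff one_pos).mpr hα1
  set s : Ω → ℝ := ⇑ST with hs
  have hsm : Measurable s := (Lp.stronglyMeasurable ST).measurable
  set E := {ω : Ω | s ω = 0} with hE
  set Pos := {ω : Ω | 0 < s ω} with hPosdef
  have hEm : MeasurableSet E := hsm (measurableSet_singleton 0)
  have hPosm : MeasurableSet Pos := measurableSet_lt measurable_const hsm
  have hEPos_disj : Disjoint E Pos := by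
    rw [Set.disjoint_left]
    intro ω h1 h2
    rw [hE, Set.mem_setOf_eq] at h1
    rw [hPosdef, Set.mem_setOf_eq] at h2
    linarith
  have hs0 : ∀ᵐ ω ∂(volume : Measure Ω), 0 ≤ s ω := (Lp.coeFn_nonneg ST).mpr hST
  have hnullneg : volume {ω : Ω | ¬ (0 ≤ s ω)} = 0 := ae_iff.mp hs0
  have hEuP : volume (E ∪ Pos) = 1 := by
    have h1 : E ∪ Pos = {ω | 0 ≤ s ω} := by
      ext ω
      simp only [hE, hPosdef, Set.mem_union, Set.mem_setOf_eq]
      constructor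
      · rintro (h | h) <;> linarith
      · intro h
        rcases eq_or_lt_of_le h with h' | h'
        · exact Or.inl h'.symm
        · exact Or.inr h'
    rw [h1]
    have h2 : {ω : Ω | 0 ≤ s ω} =ᵐ[(volume : Measure Ω)] Set.univ := by
      filter_upwards [hs0] with ω hω
      exact eq_true hω
    rw [measure_congr h2, measure_univ]
  have hsum : volume E + volume Pos = 1 := by
    rw [← measure_union hEPos_disj hPosm, hEuP]
  have hPos_eq : volume Pos = 1 - volume E := by
    rw [← hsum]; exact (ENNReal.add_sub_cancel_left (measure_ne_top _ _)).symm
  have hE_eq : volume E = 1 - volume Pos := by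
    rw [← hsum]; exact (ENNReal.add_sub_cancel_right (measure_ne_top _ _)).symm
  set M : (Ω → ℝ) → ℝ → ℝ≥0∞ := fun f r => volume {ω | f ω + r * s ω < 0} with hM
  have hmem : ∀ (x : Lp ℝ p (volume : Measure Ω)) (r : ℝ),
      (x + (r / S0) • ST ∈ varAcc (Ω := Ω) p α) ↔ M ⇑x (r / S0) ≤ a := by
    intro x r
    have hcoe : ⇑(x + (r / S0) • ST) =ᵐ[(volume : Measure Ω)]
        fun ω => x ω + (r / S0) * s ω := by
      filter_upwards [Lp.coeFn_add x ((r / S0) • ST), Lp.coeFn_smul (r / S0) ST] with ω h1 h2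
      rw [h1]
      simp only [Pi.add_apply, Pi.smul_apply, smul_eq_mul, h2]; rfl
    have hseteq : {ω | (⇑(x + (r / S0) • ST)) ω < 0} =ᵐ[(volume : Measure Ω)]
        {ω | x ω + (r / S0) * s ω < 0} := by
      filter_upwards [hcoe] with ω hω
      exact congrArg (fun z : ℝ => (z < 0 : Prop)) hω
    show volume {ω | (⇑(x + (r / S0) • ST)) ω < 0} ≤ ENNReal.ofReal α ↔ _
    rw [measure_congr hseteq]
  have hrho_eq : ∀ x, rho p (varAcc (Ω := Ω) p α) S0 ST x =
      sInf ((fun r : ℝ => (r : EReal)) '' {r : ℝ | M ⇑x (r / S0) ≤ a}) := by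
    intro x
    unfold rho
    rw [show {r : ℝ | x + (r / S0) • ST ∈ varAcc (Ω := Ω) p α}
      = {r : ℝ | M ⇑x (r / S0) ≤ a} from Set.ext fun r => hmem x r]
  have hM_congr : ∀ (f g : Ω → ℝ), f =ᵐ[(volume : Measure Ω)] g → ∀ r, M f r = M g r := by
    intro f g hfg r
    apply measure_congr
    filter_upwards [hfg] with ω hω
    exact congrArg (fun z : ℝ => (z + r * s ω < 0 : Prop)) hω
  have hTop : ∀ x : Lp ℝ p (volume : Measure Ω), (∀ r : ℝ, ¬ (M ⇑x (r / S0) ≤ a)) →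
      rho p (varAcc (Ω := Ω) p α) S0 ST x = ⊤ := by
    intro x hx
    rw [hrho_eq x]
    have h0 : {r : ℝ | M ⇑x (r / S0) ≤ a} = ∅ := Set.eq_empty_iff_forall_notMem.mpr hx
    rw [h0, Set.image_empty, sInf_empty]
  have hsInf_Ici : ∀ c : ℝ, sInf ((fun r : ℝ => (r : EReal)) '' Set.Ici c) = (c : EReal) := by
    intro c
    apply le_antisymm
    · exact sInf_le ⟨c, Set.self_mem_Ici, rfl⟩
    · refine le_sInf ?_
      rintro y ⟨r, hr, rfl⟩
      exact EReal.coe_le_coe_iff.mpr hr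
  -- A1 : no top value
  have hA1 : volume E < a → ∀ x : Lp ℝ p (volume : Measure Ω), ∃ r : ℝ, M ⇑x (r / S0) ≤ a := by
    intro hEa x
    have hxm : Measurable (⇑x : Ω → ℝ) := (Lp.stronglyMeasurable x).measurable
    set K : ℕ → Set Ω := fun n => {ω | x ω + (n : ℝ) * s ω < 0} ∩ {ω | 0 ≤ s ω} with hK
    have hKm : ∀ n, MeasurableSet (K n) := fun n =>
      (measurableSet_lt (hxm.add (hsm.const_mul _)) measurable_const).inter
        (measurableSet_le measurable_const hsm)
    have hK_anti : Antitone K := by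
      intro m n hmn ω hω
      obtain ⟨h1, h2⟩ := hω
      simp only [Set.mem_setOf_eq] at h1 h2
      refine ⟨?_, h2⟩
      simp only [Set.mem_setOf_eq]
      have hc : (m : ℝ) ≤ n := by exact_mod_cast hmn
      nlinarith
    have hKlim : Tendsto (fun n => volume (K n)) atTop (𝓝 (volume (⋂ n, K n))) :=
      tendsto_measure_iInter_atTop (fun n => (hKm n).nullMeasurableSet) hK_anti ⟨0, measure_ne_top _ _⟩
    have hInter : (⋂ n, K n) ⊆ E := by
      intro ω hω
      have h0 : 0 ≤ s ω := (Set.mem_iInter.mp hω 0).2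
      by_contra hωE
      have hsne : s ω ≠ 0 := by
        intro hcon
        exact hωE (by rw [hE]; exact hcon)
      have hspos : 0 < s ω := lt_of_le_of_ne h0 (Ne.symm hsne)
      obtain ⟨n, hn⟩ := exists_nat_gt ((-(x ω)) / s ω)
      have hmem' := (Set.mem_iInter.mp hω n).1
      simp only [Set.mem_setOf_eq] at hmem'
      rw [div_lt_iff₀ hspos] at hn
      linarith
    have hlt : volume (⋂ n, K n) < a := lt_of_le_of_lt (measure_mono hInter) hEa
    obtain ⟨n, hn⟩ := (hKlim.eventually_lt_const hlt).exists
    refine ⟨(n : ℝ) * S0, ?_⟩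
    have hdiv : ((n : ℝ) * S0) / S0 = (n : ℝ) := by field_simp
    rw [hdiv]
    have hsub : {ω | x ω + (n : ℝ) * s ω < 0} ⊆ K n ∪ {ω | ¬ (0 ≤ s ω)} := by
      intro ω hω
      by_cases h : 0 ≤ s ω
      · exact Or.inl ⟨hω, h⟩
      · exact Or.inr h
    calc M ⇑x (n : ℝ) ≤ volume (K n ∪ {ω | ¬ (0 ≤ s ω)}) := measure_mono hsub
    _ ≤ volume (K n) + volume {ω | ¬ (0 ≤ s ω)} := measure_union_le _ _
    _ = volume (K n) := by rw [hnullneg, add_zero]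
    _ ≤ a := hn.le
  -- A2 : no bottom value
  have hA2 : a < volume Pos → ∀ x : Lp ℝ p (volume : Measure Ω),
      ∃ r0 : ℝ, ∀ r : ℝ, M ⇑x (r / S0) ≤ a → r0 ≤ r := by
    intro hPa x
    have hxm : Measurable (⇑x : Ω → ℝ) := (Lp.stronglyMeasurable x).measurable
    set K : ℕ → Set Ω := fun n => {ω | x ω + (-(n : ℝ)) * s ω < 0} ∩ {ω | 0 ≤ s ω} with hK
    have hK_mono : Monotone K := by
      intro m n hmn ω hω
      obtain ⟨h1, h2⟩ := hω
      simp only [Set.mem_setOf_eq] at h1 h2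
      refine ⟨?_, h2⟩
      simp only [Set.mem_setOf_eq]
      have hc : (m : ℝ) ≤ n := by exact_mod_cast hmn
      nlinarith
    have hKlim : Tendsto (fun n => volume (K n)) atTop (𝓝 (volume (⋃ n, K n))) :=
      tendsto_measure_iUnion_atTop hK_mono
    have hUnion : Pos ⊆ ⋃ n, K n := by
      intro ω hω
      rw [hPosdef, Set.mem_setOf_eq] at hω
      obtain ⟨n, hn⟩ := exists_nat_gt (x ω / s ω)
      rw [div_lt_iff₀ hω] at hn
      refine Set.mem_iUnion.mpr ⟨n, ⟨?_, hω.le⟩⟩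
      simp only [Set.mem_setOf_eq]
      nlinarith
    have hlt : a < volume (⋃ n, K n) := lt_of_lt_of_le hPa (measure_mono hUnion)
    obtain ⟨n, hn⟩ := (hKlim.eventually_const_lt hlt).exists
    refine ⟨-(n : ℝ) * S0, ?_⟩
    intro r hMr
    by_contra hc
    push_neg at hc
    have hrdiv : r / S0 < -(n : ℝ) := by
      rw [div_lt_iff₀ hS0]
      nlinarith
    have hsub : K n ⊆ {ω | x ω + (r / S0) * s ω < 0} := by
      rintro ω ⟨h1, h2⟩
      simp only [Set.mem_setOf_eq] at h1 h2 ⊢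
      nlinarith
    have : a < M ⇑x (r / S0) := lt_of_lt_of_le hn (measure_mono hsub)
    exact absurd hMr (not_le.mpr this)
  -- B1 : rho at 0 is bot when Pos small
  have hB1 : volume Pos ≤ a → rho p (varAcc (Ω := Ω) p α) S0 ST 0 = ⊥ := by
    intro hPa
    have hG : ∀ r : ℝ, M ⇑(0 : Lp ℝ p (volume : Measure Ω)) (r / S0) ≤ a := by
      intro r
      rw [hM_congr _ (fun _ => (0 : ℝ)) (Lp.coeFn_zero ℝ p (volume : Measure Ω)) (r / S0)]
      rcases le_or_gt 0 r with hr | hr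
      · have hr' : 0 ≤ r / S0 := div_nonneg hr hS0.le
        have hsub : {ω : Ω | (0 : ℝ) + (r / S0) * s ω < 0} ⊆ {ω | ¬ (0 ≤ s ω)} := by
          intro ω hω
          simp only [Set.mem_setOf_eq, zero_add] at hω
          intro hcon
          nlinarith
        calc M (fun _ => (0:ℝ)) (r / S0) ≤ volume {ω : Ω | ¬ (0 ≤ s ω)} := measure_mono hsub
        _ = 0 := hnullneg
        _ ≤ a := zero_le
      · have hr' : r / S0 < 0 := div_neg_of_neg_of_pos hr hS0
        have hsub : {ω : Ω | (0 : ℝ) + (r / S0) * s ω < 0} ⊆ Pos ∪ {ω | ¬ (0 ≤ s ω)} := by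
          intro ω hω
          simp only [Set.mem_setOf_eq, zero_add] at hω
          by_cases h : 0 ≤ s ω
          · left
            rw [hPosdef, Set.mem_setOf_eq]
            rcases eq_or_lt_of_le h with h' | h'
            · exfalso; rw [← h'] at hω; simp at hω
            · exact h'
          · exact Or.inr h
        calc M (fun _ => (0:ℝ)) (r / S0) ≤ volume (Pos ∪ {ω | ¬ (0 ≤ s ω)}) := measure_mono hsub
        _ ≤ volume Pos + volume {ω | ¬ (0 ≤ s ω)} := measure_union_le _ _
        _ = volume Pos := by rw [hnullneg, add_zero]
        _ ≤ a := hPa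
    rw [hrho_eq 0]
    have h0 : {r : ℝ | M ⇑(0 : Lp ℝ p (volume : Measure Ω)) (r / S0) ≤ a} = Set.univ :=
      Set.eq_univ_of_forall hG
    rw [h0]
    refine (EReal.eq_bot_iff_forall_lt _).mpr ?_
    intro y
    refine lt_of_le_of_lt (sInf_le ⟨y - 1, Set.mem_univ _, rfl⟩) ?_
    exact EReal.coe_lt_coe_iff.mpr (sub_one_lt y)
  have hiff : (∀ x, rho p (varAcc (Ω := Ω) p α) S0 ST x ≠ ⊤ ∧
        rho p (varAcc (Ω := Ω) p α) S0 ST x ≠ ⊥) ↔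
      volume E < ENNReal.ofReal (min α (1 - α)) := by
    constructor
    · intro hfin
      have h1 : volume E < ENNReal.ofReal (1 - α) := by
        by_contra hcon
        push_neg at hcon
        have hPle : volume Pos ≤ a := by
          rw [hPos_eq]
          calc 1 - volume E ≤ 1 - ENNReal.ofReal (1 - α) := tsub_le_tsub_left hcon 1
          _ = a := by
              rw [ha, ← ENNReal.ofReal_one,
                ← ENNReal.ofReal_sub _ (by linarith : (0:ℝ) ≤ 1 - α)]
              norm_num
        exact (hfin 0).2 (hB1 hPle)
      have h2 : volume E < a := by
        by_contra hcon
        push_neg at hcon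
        rcases lt_or_eq_of_le hcon with hlt | heq
        · set x1 : Lp ℝ p (volume : Measure Ω) :=
            (memLp_const (-1 : ℝ)).toLp (fun _ => (-1 : ℝ)) with hx1
          refine (hfin x1).1 (hTop x1 ?_)
          intro r hle
          have hMc : M ⇑x1 (r / S0) = M (fun _ => (-1 : ℝ)) (r / S0) :=
            hM_congr _ _ (MemLp.coeFn_toLp _) _
          have hEsub : E ⊆ {ω | (-1 : ℝ) + (r / S0) * s ω < 0} := by
            intro ω hω
            have hsω : s ω = 0 := hω
            simp only [Set.mem_setOf_eq, hsω]
            norm_num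
          have hlt2 : a < M ⇑x1 (r / S0) := by
            rw [hMc]
            exact lt_of_lt_of_le hlt (measure_mono hEsub)
          exact absurd hle (not_le.mpr hlt2)
        · have hPos0 : 0 < volume Pos := by
            rw [hPos_eq, ← heq]
            exact tsub_pos_of_lt ha_lt1
          obtain ⟨x, hx⟩ := rv_unbounded hp hna ST hPos0
          refine (hfin x).1 (hTop x ?_)
          intro r hle
          have hlt2 : a < M ⇑x (r / S0) := by
            rw [heq]
            exact hx (r / S0)
          exact absurd hle (not_le.mpr hlt2)
      rcases le_total α (1 - α) with hm | hm
      · rwa [min_eq_left hm]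
      · rwa [min_eq_right hm]
    · intro hmin x
      have h2 : volume E < a :=
        lt_of_lt_of_le hmin (ENNReal.ofReal_le_ofReal (min_le_left _ _))
      have h1 : volume E < ENNReal.ofReal (1 - α) :=
        lt_of_lt_of_le hmin (ENNReal.ofReal_le_ofReal (min_le_right _ _))
      have hPa : a < volume Pos := by
        rw [hPos_eq, (ENNReal.cancel_of_ne (measure_ne_top _ _)).lt_tsub_iff_right]
        calc a + volume E < a + ENNReal.ofReal (1 - α) := ENNReal.add_lt_add_left ha_top h1
        _ = 1 := by
            rw [ha, ← ENNReal.ofReal_add (by linarith) (by linarith)]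
            norm_num
      constructor
      · obtain ⟨r, hr⟩ := hA1 h2 x
        rw [hrho_eq x]
        intro hcon
        have hle : sInf ((fun r : ℝ => (r : EReal)) '' {r : ℝ | M ⇑x (r / S0) ≤ a})
            ≤ ((r : ℝ) : EReal) := sInf_le ⟨r, hr, rfl⟩
        rw [hcon] at hle
        exact EReal.coe_ne_top r (top_le_iff.mp hle)
      · obtain ⟨r0, hr0⟩ := hA2 hPa x
        rw [hrho_eq x]
        intro hcon
        have hlow : ((r0 : ℝ) : EReal) ≤
            sInf ((fun r : ℝ => (r : EReal)) '' {r : ℝ | M ⇑x (r / S0) ≤ a}) := by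
          refine le_sInf ?_
          rintro y ⟨r, hr, rfl⟩
          exact EReal.coe_le_coe_iff.mpr (hr0 r hr)
        rw [hcon] at hlow
        exact EReal.coe_ne_bot r0 (le_bot_iff.mp hlow)
  refine ⟨hiff, ?_⟩
  intro hcont
  rcases le_or_gt (volume Pos) a with hPa | hPa
  · -- Case 1 : volume Pos ≤ a
    set χ : Lp ℝ p (volume : Measure Ω) :=
      indicatorConstLp p hEm (measure_ne_top _ _) (1 : ℝ) with hχ
    set y : ℕ → Lp ℝ p (volume : Measure Ω) := fun n => (-(1 / ((n : ℝ) + 1))) • χ with hy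
    have hy_tendsto : Tendsto y atTop (𝓝 0) := by
      rw [tendsto_zero_iff_norm_tendsto_zero]
      have hnorm : ∀ n : ℕ, ‖y n‖ = (1 / ((n : ℝ) + 1)) * ‖χ‖ := by
        intro n
        rw [hy]
        simp only
        rw [norm_smul, Real.norm_eq_abs, abs_neg, abs_of_pos (by positivity)]
      have hlim : Tendsto (fun n : ℕ => (1 / ((n : ℝ) + 1)) * ‖χ‖) atTop (𝓝 0) := by
        have h2 := tendsto_one_div_add_atTop_nhds_zero_nat.mul_const ‖χ‖
        rw [zero_mul] at h2
        exact h2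
      exact hlim.congr fun n => (hnorm n).symm
    have hcoe_y : ∀ n : ℕ, ⇑(y n) =ᵐ[(volume : Measure Ω)]
        fun ω => -(1 / ((n : ℝ) + 1)) * E.indicator (fun _ => (1 : ℝ)) ω := by
      intro n
      have h2 : ⇑χ =ᵐ[(volume : Measure Ω)] E.indicator (fun _ => (1:ℝ)) :=
        indicatorConstLp_coeFn
      filter_upwards [Lp.coeFn_smul (-(1 / ((n : ℝ) + 1))) χ, h2] with ω h1 h2'
      rw [hy]
      simp only
      rw [h1]
      simp only [Pi.smul_apply, smul_eq_mul, h2']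
    have hEsubZ : ∀ (n : ℕ) (r' : ℝ),
        E ⊆ {ω | -(1 / ((n : ℝ) + 1)) * E.indicator (fun _ => (1:ℝ)) ω + r' * s ω < 0} := by
      intro n r' ω hω
      have h1 : s ω = 0 := hω
      rw [Set.mem_setOf_eq, Set.indicator_of_mem hω, h1]
      have h2 : (0:ℝ) < 1 / ((n : ℝ) + 1) := by positivity
      nlinarith
    have hlim0 : Tendsto (fun n => rho p (varAcc (Ω := Ω) p α) S0 ST (y n)) atTop
        (𝓝 (rho p (varAcc (Ω := Ω) p α) S0 ST 0)) := (hcont.tendsto 0).comp hy_tendsto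
    rw [hB1 hPa] at hlim0
    rcases le_or_gt (volume E) a with hEa | hEa
    · -- rho (y n) = 0 for all n
      have hval : ∀ n : ℕ, rho p (varAcc (Ω := Ω) p α) S0 ST (y n) = ((0:ℝ) : EReal) := by
        intro n
        rw [hrho_eq]
        have hset : {r : ℝ | M ⇑(y n) (r / S0) ≤ a} = Set.Ici 0 := by
          ext r
          simp only [Set.mem_setOf_eq, Set.mem_Ici]
          rw [hM_congr _ _ (hcoe_y n) (r / S0)]
          constructor
          · intro hle
            by_contra hr
            push_neg at hr
            have hr' : r / S0 < 0 := div_neg_of_neg_of_pos hr hS0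
            have hsubZ : E ∪ Pos ⊆
                {ω | -(1 / ((n : ℝ) + 1)) * E.indicator (fun _ => (1:ℝ)) ω + (r / S0) * s ω < 0} := by
              rintro ω (hω | hω)
              · exact hEsubZ n (r / S0) hω
              · have h1 : 0 < s ω := hω
                have h2 : ω ∉ E := Set.disjoint_right.mp hEPos_disj hω
                rw [Set.mem_setOf_eq, Set.indicator_of_notMem h2]
                have h3 : (r / S0) * s ω < 0 := mul_neg_of_neg_of_pos hr' h1
                nlinarith
            have h4 : (1:ℝ≥0∞) ≤ M (fun ω => -(1 / ((n : ℝ) + 1)) *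
                E.indicator (fun _ => (1:ℝ)) ω) (r / S0) := by
              rw [← hEuP]
              exact measure_mono hsubZ
            exact absurd hle (not_le.mpr (lt_of_lt_of_le ha_lt1 h4))
          · intro hr
            have hr' : 0 ≤ r / S0 := div_nonneg hr hS0.le
            have hsubZ : {ω | -(1 / ((n : ℝ) + 1)) * E.indicator (fun _ => (1:ℝ)) ω + (r / S0) * s ω < 0}
                ⊆ E ∪ {ω | ¬ (0 ≤ s ω)} := by
              intro ω hω
              by_cases hE' : ω ∈ E
              · exact Or.inl hE'
              · by_cases hsgn : 0 ≤ s ω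
                · exfalso
                  rw [Set.mem_setOf_eq, Set.indicator_of_notMem hE'] at hω
                  nlinarith
                · exact Or.inr hsgn
            calc M (fun ω => -(1 / ((n : ℝ) + 1)) * E.indicator (fun _ => (1:ℝ)) ω) (r / S0)
                ≤ volume (E ∪ {ω | ¬ (0 ≤ s ω)}) := measure_mono hsubZ
            _ ≤ volume E + volume {ω | ¬ (0 ≤ s ω)} := measure_union_le _ _
            _ = volume E := by rw [hnullneg, add_zero]
            _ ≤ a := hEa
        rw [hset]
        exact hsInf_Ici 0
      have h2 : Tendsto (fun _ : ℕ => ((0:ℝ) : EReal)) atTop (𝓝 ⊥) := hlim0.congr hval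
      have h3 := tendsto_nhds_unique h2 tendsto_const_nhds
      exact EReal.coe_ne_bot 0 h3.symm
    · -- rho (y n) = ⊤ for all n
      have hval : ∀ n : ℕ, rho p (varAcc (Ω := Ω) p α) S0 ST (y n) = ⊤ := by
        intro n
        refine hTop (y n) ?_
        intro r hle
        rw [hM_congr _ _ (hcoe_y n) (r / S0)] at hle
        have h4 : a < M (fun ω => -(1 / ((n : ℝ) + 1)) *
            E.indicator (fun _ => (1:ℝ)) ω) (r / S0) :=
          lt_of_lt_of_le hEa (measure_mono (hEsubZ n (r / S0)))
        exact absurd hle (not_le.mpr h4)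
      have h2 : Tendsto (fun _ : ℕ => (⊤ : EReal)) atTop (𝓝 ⊥) := hlim0.congr hval
      have h3 := tendsto_nhds_unique h2 tendsto_const_nhds
      exact bot_ne_top h3 
  · -- Case 2 : a < volume Pos
    obtain ⟨A, hAsub, hAm, hAvol⟩ := rv_exact hna hPosm hPa.le
    set q := p.toReal with hq
    have hp1 : (1:ℝ≥0∞) ≤ p := Fact.out
    have hp0 : p ≠ 0 := (lt_of_lt_of_le zero_lt_one hp1).ne'
    have hq1 : 1 ≤ q := by
      rw [hq, ← ENNReal.toReal_one]
      exact ENNReal.toReal_mono hp hp1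
    have hq0 : (0:ℝ) < q := lt_of_lt_of_le one_pos hq1
    set ν := (volume : Measure Ω).withDensity (fun ω => (‖s ω‖₊ : ℝ≥0∞) ^ q) with hν
    have hνfin : ν Set.univ < ⊤ := by
      rw [hν, withDensity_apply _ MeasurableSet.univ, Measure.restrict_univ]
      exact lintegral_rpow_enorm_lt_top_of_eLpNorm_lt_top hp0 hp (Lp.eLpNorm_lt_top ST)
    have hνne : ∀ B : Set Ω, ν B ≠ ⊤ := fun B =>
      ((measure_mono (Set.subset_univ B)).trans_lt hνfin).ne
    have hPA : 0 < volume (Pos \ A) := by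
      rw [measure_diff hAsub hAm.nullMeasurableSet (measure_ne_top _ _), hAvol]
      exact tsub_pos_of_lt hPa
    have hBn : ∀ n : ℕ, ∃ B, B ⊆ Pos \ A ∧ MeasurableSet B ∧ 0 < volume B ∧
        ν B ≤ 2⁻¹ ^ n := by
      intro n
      obtain ⟨B, h1, h2, h3, h4, h5⟩ := rv_small hna ν (Pos \ A) (hPosm.diff hAm) hPA (hνne _)
        (ε := 2⁻¹ ^ n) (pow_ne_zero _ (ENNReal.inv_ne_zero.mpr (by norm_num)))
      exact ⟨B, h1, h2, h3, h5⟩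
    choose B hB_sub hB_meas hB_pos hB_ν using hBn
    set x0 : Ω → ℝ := fun ω => -(A.indicator (fun _ => (1:ℝ)) ω * s ω) with hx0
    set x0n : ℕ → Ω → ℝ := fun n ω => -((A ∪ B n).indicator (fun _ => (1:ℝ)) ω * s ω) with hx0n
    have hABdisj : ∀ n, Disjoint A (B n) := fun n => (Set.subset_diff.mp (hB_sub n)).2.symm
    have hx0m : Measurable x0 := ((measurable_const.indicator hAm).mul hsm).neg
    have hx0nm : ∀ n, Measurable (x0n n) := fun n =>
      ((measurable_const.indicator (hAm.union (hB_meas n))).mul hsm).neg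
    have hbound : ∀ (U : Set Ω) (ω : Ω), ‖-(U.indicator (fun _ => (1:ℝ)) ω * s ω)‖ ≤ ‖s ω‖ := by
      intro U ω
      rw [norm_neg, norm_mul]
      by_cases h : ω ∈ U
      · rw [Set.indicator_of_mem h]
        simp
      · rw [Set.indicator_of_notMem h]
        simp [norm_nonneg]
    have hmem0 : MemLp x0 p (volume : Measure Ω) :=
      MemLp.of_le (Lp.memLp ST) hx0m.aestronglyMeasurable (Filter.Eventually.of_forall (hbound A))
    have hmemn : ∀ n, MemLp (x0n n) p (volume : Measure Ω) := fun n =>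
      MemLp.of_le (Lp.memLp ST) (hx0nm n).aestronglyMeasurable
        (Filter.Eventually.of_forall (hbound _))
    obtain ⟨x, hx_coe⟩ : ∃ x : Lp ℝ p (volume : Measure Ω),
        ⇑x =ᵐ[(volume : Measure Ω)] x0 := ⟨hmem0.toLp x0, hmem0.coeFn_toLp⟩
    obtain ⟨xn, hxn_coe⟩ : ∃ xn : ℕ → Lp ℝ p (volume : Measure Ω),
        ∀ n, ⇑(xn n) =ᵐ[(volume : Measure Ω)] x0n n :=
      ⟨fun n => (hmemn n).toLp (x0n n), fun n => (hmemn n).coeFn_toLp⟩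
    have hdiff_coe : ∀ n, ⇑(xn n - x) =ᵐ[(volume : Measure Ω)]
        fun ω => -((B n).indicator (fun _ => (1:ℝ)) ω * s ω) := by
      intro n
      filter_upwards [Lp.coeFn_sub (xn n) x, hxn_coe n, hx_coe]
        with ω h1 h2 h3
      rw [h1, Pi.sub_apply, h2, h3]
      simp only [hx0n, hx0]
      rw [Set.indicator_union_of_disjoint (hABdisj n)]
      simp only [Pi.add_apply]
      ring
    have hsn : ∀ n, eLpNorm (fun ω => -((B n).indicator (fun _ => (1:ℝ)) ω * s ω)) p
        (volume : Measure Ω) = (ν (B n)) ^ ((1:ℝ)/q) := by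
      intro n
      rw [eLpNorm_eq_lintegral_rpow_enorm hp0 hp, ← hq]; simp only [enorm_eq_nnnorm]
      have hpt : ∀ ω, ((‖-((B n).indicator (fun _ => (1:ℝ)) ω * s ω)‖₊ : ℝ≥0∞)) ^ q
          = (B n).indicator (fun ω' => (‖s ω'‖₊ : ℝ≥0∞) ^ q) ω := by
        intro ω
        by_cases h : ω ∈ B n
        · rw [Set.indicator_of_mem h, Set.indicator_of_mem h, one_mul, nnnorm_neg]
        · rw [Set.indicator_of_notMem h, Set.indicator_of_notMem h, zero_mul, neg_zero,
            nnnorm_zero]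
          rw [ENNReal.coe_zero, ENNReal.zero_rpow_of_pos hq0]
      rw [lintegral_congr hpt, lintegral_indicator (hB_meas n), hν,
        withDensity_apply _ (hB_meas n)]
    have hnorm_eq : ∀ n, ‖xn n - x‖ = ((ν (B n)) ^ ((1:ℝ)/q)).toReal := by
      intro n
      rw [Lp.norm_def, eLpNorm_congr_ae (hdiff_coe n), hsn n]
    have hxn_tendsto : Tendsto xn atTop (𝓝 x) := by
      rw [tendsto_iff_norm_sub_tendsto_zero]
      refine squeeze_zero (g := fun n : ℕ => (((2⁻¹:ℝ≥0∞) ^ n) ^ ((1:ℝ)/q)).toReal)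
        (fun n => norm_nonneg _) (fun n => ?_) ?_
      · rw [hnorm_eq n]
        refine ENNReal.toReal_mono ?_ (ENNReal.rpow_le_rpow (hB_ν n) (by positivity))
        refine (ENNReal.rpow_lt_top_of_nonneg (by positivity) ?_).ne
        exact (pow_ne_top (by norm_num : (2⁻¹:ℝ≥0∞) ≠ ⊤))
      · have hwr : ∀ n : ℕ, (((2⁻¹:ℝ≥0∞) ^ n) ^ ((1:ℝ)/q)).toReal
            = ((2⁻¹:ℝ) ^ ((1:ℝ)/q)) ^ n := by
          intro n
          rw [← ENNReal.rpow_natCast (2⁻¹:ℝ≥0∞) n, ← ENNReal.rpow_mul, mul_comm,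
            ENNReal.rpow_mul, ENNReal.rpow_natCast, ENNReal.toReal_pow]
          congr 1
          rw [← ENNReal.toReal_rpow]
          congr 1
          simp
        simp only [hwr]
        have hr0 : (0:ℝ) ≤ (2⁻¹:ℝ) ^ ((1:ℝ)/q) := Real.rpow_nonneg (by norm_num) _
        have hr1 : ((2⁻¹:ℝ)) ^ ((1:ℝ)/q) < 1 :=
          Real.rpow_lt_one (by norm_num) (by norm_num) (by positivity)
        exact tendsto_pow_atTop_nhds_zero_of_lt_one hr0 hr1
    have hrx : rho p (varAcc (Ω := Ω) p α) S0 ST x = ((0:ℝ) : EReal) := by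
      rw [hrho_eq]
      have hset : {r : ℝ | M ⇑x (r / S0) ≤ a} = Set.Ici 0 := by
        ext r
        simp only [Set.mem_setOf_eq, Set.mem_Ici]
        rw [hM_congr _ _ hx_coe (r / S0)]
        constructor
        · intro hle
          by_contra hr
          push_neg at hr
          have hr' : r / S0 < 0 := div_neg_of_neg_of_pos hr hS0
          have hsubZ : Pos ⊆ {ω | x0 ω + (r / S0) * s ω < 0} := by
            intro ω hω
            have h1 : 0 < s ω := hω
            rw [Set.mem_setOf_eq, hx0]
            simp only
            by_cases h : ω ∈ A
            · rw [Set.indicator_of_mem h]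
              nlinarith
            · rw [Set.indicator_of_notMem h]
              nlinarith [mul_neg_of_neg_of_pos hr' h1]
          have h5 := lt_of_lt_of_le hPa (measure_mono hsubZ)
          exact absurd hle (not_le.mpr h5)
        · intro hr
          have hr' : 0 ≤ r / S0 := div_nonneg hr hS0.le
          have hsubZ : {ω | x0 ω + (r / S0) * s ω < 0} ⊆ A ∪ {ω | ¬ (0 ≤ s ω)} := by
            intro ω hω
            rw [Set.mem_setOf_eq, hx0] at hω
            simp only at hω
            by_cases h : ω ∈ A
            · exact Or.inl h
            · by_cases hsgn : 0 ≤ s ω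
              · exfalso
                rw [Set.indicator_of_notMem h] at hω
                nlinarith
              · exact Or.inr hsgn
          calc M x0 (r / S0) ≤ volume (A ∪ {ω | ¬ (0 ≤ s ω)}) := measure_mono hsubZ
          _ ≤ volume A + volume {ω | ¬ (0 ≤ s ω)} := measure_union_le _ _
          _ = a := by rw [hnullneg, add_zero, hAvol]
      rw [hset]
      exact hsInf_Ici 0
    have hABPos : ∀ n, A ∪ B n ⊆ Pos := fun n =>
      Set.union_subset hAsub ((hB_sub n).trans Set.diff_subset)
    have hμAB : ∀ n, a < volume (A ∪ B n) := by
      intro n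
      rw [measure_union (hABdisj n) (hB_meas n), hAvol]
      exact ENNReal.lt_add_right ha_top (hB_pos n).ne'
    have hrxn : ∀ n, rho p (varAcc (Ω := Ω) p α) S0 ST (xn n) = ((S0 : ℝ) : EReal) := by
      intro n
      rw [hrho_eq]
      have hset : {r : ℝ | M ⇑(xn n) (r / S0) ≤ a} = Set.Ici S0 := by
        ext r
        simp only [Set.mem_setOf_eq, Set.mem_Ici]
        rw [hM_congr _ _ (hxn_coe n) (r / S0)]
        constructor
        · intro hle
          by_contra hr
          push_neg at hr
          have hr' : r / S0 < 1 := (div_lt_one hS0).mpr hr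
          have hsubZ : A ∪ B n ⊆ {ω | x0n n ω + (r / S0) * s ω < 0} := by
            intro ω hω
            have h1 : 0 < s ω := hABPos n hω
            rw [Set.mem_setOf_eq, hx0n]
            simp only
            rw [Set.indicator_of_mem hω]
            nlinarith
          have h5 := lt_of_lt_of_le (hμAB n) (measure_mono hsubZ)
          exact absurd hle (not_le.mpr h5)
        · intro hr
          have hr' : 1 ≤ r / S0 := by
            rw [le_div_iff₀ hS0, one_mul]
            exact hr
          have hsubZ : {ω | x0n n ω + (r / S0) * s ω < 0} ⊆ {ω | ¬ (0 ≤ s ω)} := by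
            intro ω hω
            rw [Set.mem_setOf_eq, hx0n] at hω
            simp only at hω
            intro hsgn
            by_cases h : ω ∈ A ∪ B n
            · rw [Set.indicator_of_mem h] at hω
              nlinarith
            · rw [Set.indicator_of_notMem h] at hω
              nlinarith
          calc M (x0n n) (r / S0) ≤ volume {ω | ¬ (0 ≤ s ω)} := measure_mono hsubZ
          _ = 0 := hnullneg
          _ ≤ a := zero_le
      rw [hset]
      exact hsInf_Ici S0
    have hlim : Tendsto (fun n => rho p (varAcc (Ω := Ω) p α) S0 ST (xn n)) atTop
        (𝓝 (rho p (varAcc (Ω := Ω) p α) S0 ST x)) := (hcont.tendsto x).comp hxn_tendsto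
    rw [hrx] at hlim
    have h2 : Tendsto (fun _ : ℕ => ((S0 : ℝ) : EReal)) atTop (𝓝 ((0:ℝ) : EReal)) :=
      hlim.congr hrxn
    have h3 := tendsto_nhds_unique h2 tendsto_const_nhds
    have h4 : (S0 : ℝ) = 0 := by exact_mod_cast h3.symm
    exact hS0.ne' h4
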